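/- Let K/F be a field extension and (U, V; f_1,…,f_k) a semistable representation of the k-arrow Kronecker quiver over F. Then the base-changed representation (K⊗_F U, K⊗_F V; id_K⊗f_1,…,id_K⊗f_k) over K is semistable. -/

import Mathlib

open scoped BigOperators
open Module

namespace Paper

/-- Semistability of a Kronecker-quiver representation `f : ι → U →ₗ[F] V`:
every nonzero subrepresentation `(U',V')` has slope `dim U'/dim V'` at most `dim U/dim V`
(stated in cross-multiplied form, with the convention `μ* = ∞` when `dim V' = 0`). -/
def Semistable (F : Type*) [Field F] {ι U V : Type*} [AddCommGroup U] [Module F U]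
    [AddCommGroup V] [Module F V] (f : ι → U →ₗ[F] V) : Prop :=
  ∀ (U' : Submodule F U) (V' : Submodule F V),
    (∀ l, U'.map (f l) ≤ V') → ¬(U' = ⊥ ∧ V' = ⊥) →
    finrank F U' * finrank F V ≤ finrank F U * finrank F V'

/-- A subset `Φ ⊆ J × K` is balanced if some probability distribution supported inside `Φ`
has uniform marginals on both `J` and `K`. -/
def Balanced {J K : Type*} [Fintype J] [Fintype K] (Φ : Set (J × K)) : Prop :=
  ∃ P : J × K → ℝ, (∀ x, 0 ≤ P x) ∧ (∑ x, P x) = 1 ∧ (∀ x, P x ≠ 0 → x ∈ Φ) ∧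
    (∀ j : J, (∑ kk, P (j, kk)) = 1 / (Fintype.card J : ℝ)) ∧
    (∀ kk : K, (∑ j, P (j, kk)) = 1 / (Fintype.card K : ℝ))

universe u

section AuxGeneral
variable {F : Type*} [Field F]

theorem le_all' {ι U V : Type*} [AddCommGroup U] [Module F U]
    [AddCommGroup V] [Module F V] {f : ι → U →ₗ[F] V} (hf : Semistable F f)
    (U' : Submodule F U) (V' : Submodule F V) (h : ∀ l, U'.map (f l) ≤ V') :
    finrank F U' * finrank F V ≤ finrank F U * finrank F V' := by
  by_cases hb : U' = ⊥ ∧ V' = ⊥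
  · rw [hb.1, finrank_bot]; simp
  · exact hf U' V' h hb

theorem semistable_of_equiv {ι U₁ V₁ U₂ V₂ : Type*} [AddCommGroup U₁] [Module F U₁]
    [AddCommGroup V₁] [Module F V₁] [AddCommGroup U₂] [Module F U₂] [AddCommGroup V₂]
    [Module F V₂]
    {f₁ : ι → U₁ →ₗ[F] V₁} {f₂ : ι → U₂ →ₗ[F] V₂} (e₁ : U₁ ≃ₗ[F] U₂) (e₂ : V₁ ≃ₗ[F] V₂)
    (hcomm : ∀ l u, f₂ l (e₁ u) = e₂ (f₁ l u)) (h : Semistable F f₁) : Semistable F f₂ := by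
  intro U' V' hmap _
  have hmap₁ : ∀ l, (U'.comap (e₁ : U₁ →ₗ[F] U₂)).map (f₁ l) ≤ V'.comap (e₂ : V₁ →ₗ[F] V₂) := by
    rintro l v ⟨u, hu, rfl⟩
    have h2 : f₂ l (e₁ u) ∈ V' := hmap l ⟨e₁ u, hu, rfl⟩
    rw [hcomm] at h2
    simpa using h2
  have h1 := le_all' h _ _ hmap₁
  rw [Submodule.comap_equiv_eq_map_symm, Submodule.comap_equiv_eq_map_symm,
    LinearEquiv.finrank_map_eq, LinearEquiv.finrank_map_eq, e₁.finrank_eq, e₂.finrank_eq] at h1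
  exact h1

theorem nat_cross {a₁ b₁ p₁ q₁ p₂ q₂ : ℕ} (h₁ : a₁ * q₁ ≤ p₁ * b₁)
    (hprop : p₂ * q₁ = p₁ * q₂) (ha₁ : a₁ ≤ p₁) : a₁ * q₂ ≤ p₂ * b₁ := by
  rcases Nat.eq_zero_or_pos q₁ with h0 | hq
  · subst h0
    rcases Nat.mul_eq_zero.mp hprop.symm with hp | hq2
    · have : a₁ = 0 := by omega
      simp [this]
    · simp [hq2]
  · have h2 : (a₁ * q₂) * q₁ ≤ (p₂ * b₁) * q₁ := by
      calc (a₁ * q₂) * q₁ = (a₁ * q₁) * q₂ := by ring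
        _ ≤ (p₁ * b₁) * q₂ := Nat.mul_le_mul_right _ h₁
        _ = (p₁ * q₂) * b₁ := by ring
        _ = (p₂ * q₁) * b₁ := by rw [hprop]
        _ = (p₂ * b₁) * q₁ := by ring
    exact Nat.le_of_mul_le_mul_right h2 hq

theorem nat_prod_ineq {a₁ b₁ p₁ q₁ a₂ b₂ p₂ q₂ : ℕ} (h₁ : a₁ * q₁ ≤ p₁ * b₁)
    (h₂ : a₂ * q₂ ≤ p₂ * b₂) (hprop : p₂ * q₁ = p₁ * q₂) (ha₁ : a₁ ≤ p₁) (ha₂ : a₂ ≤ p₂) :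
    (a₁ + a₂) * (q₁ + q₂) ≤ (p₁ + p₂) * (b₁ + b₂) := by
  have c1 : a₁ * q₂ ≤ p₂ * b₁ := nat_cross h₁ hprop ha₁
  have c2 : a₂ * q₁ ≤ p₁ * b₂ := nat_cross h₂ hprop.symm ha₂
  nlinarith [h₁, h₂, c1, c2]

theorem finrank_fin_fun' (n : ℕ) (M : Type*) [AddCommGroup M] [Module F M]
    [FiniteDimensional F M] : finrank F (Fin n → M) = n * finrank F M := by
  rw [Module.finrank_pi_fintype, Finset.sum_const, Finset.card_univ, Fintype.card_fin,
    smul_eq_mul]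

theorem finrank_prod_decomp {U₁ U₂ : Type*} [AddCommGroup U₁] [Module F U₁]
    [AddCommGroup U₂] [Module F U₂] [FiniteDimensional F U₁] [FiniteDimensional F U₂]
    (W : Submodule F (U₁ × U₂)) :
    finrank F W = finrank F (W.comap (LinearMap.inl F U₁ U₂))
      + finrank F (W.map (LinearMap.snd F U₁ U₂)) := by
  classical
  set φ : W →ₗ[F] U₂ := (LinearMap.snd F U₁ U₂) ∘ₗ W.subtype with hφ
  have hrange : LinearMap.range φ = W.map (LinearMap.snd F U₁ U₂) := by
    rw [hφ, LinearMap.range_comp, Submodule.range_subtype]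
  have hker : Nonempty ((LinearMap.ker φ) ≃ₗ[F] (W.comap (LinearMap.inl F U₁ U₂))) := by
    refine ⟨LinearEquiv.ofBijective (LinearMap.codRestrict _
      ((LinearMap.fst F U₁ U₂) ∘ₗ W.subtype ∘ₗ (LinearMap.ker φ).subtype) ?_) ⟨?_, ?_⟩⟩
    · intro w
      have hw : (w.1 : U₁ × U₂) ∈ W := (w.1).2
      have h0 : ((w.1 : U₁ × U₂)).2 = 0 := w.2
      have : (((w.1 : U₁ × U₂)).1, (0 : U₂)) = (w.1 : U₁ × U₂) := by
        rw [← h0]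
      simp only [Submodule.mem_comap, LinearMap.coe_comp, Function.comp_apply,
        Submodule.coe_subtype, LinearMap.fst_apply, LinearMap.inl_apply]
      rw [this]; exact hw
    · intro w₁ w₂ hw
      have h1 : ((w₁.1 : U₁ × U₂)).1 = ((w₂.1 : U₁ × U₂)).1 := congrArg Subtype.val hw
      have h2 : ((w₁.1 : U₁ × U₂)).2 = ((w₂.1 : U₁ × U₂)).2 := by
        have a1 : ((w₁.1 : U₁ × U₂)).2 = 0 := w₁.2
        have a2 : ((w₂.1 : U₁ × U₂)).2 = 0 := w₂.2
        rw [a1, a2]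
      ext
      · exact h1
      · exact h2
    · rintro ⟨u, hu⟩
      have hu' : ((u, (0:U₂)) : U₁ × U₂) ∈ W := hu
      refine ⟨⟨⟨(u, 0), hu'⟩, ?_⟩, rfl⟩
      show ((⟨(u, 0), hu'⟩ : W) : U₁ × U₂).2 = 0
      rfl
  have h1 := LinearMap.finrank_range_add_finrank_ker φ
  have h2 : finrank F (LinearMap.range φ) = finrank F (W.map (LinearMap.snd F U₁ U₂)) := by
    rw [hrange]
  have h3 : finrank F (LinearMap.ker φ)
      = finrank F (W.comap (LinearMap.inl F U₁ U₂)) := hker.some.finrank_eq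
  omega

theorem semistable_prod {ι U₁ V₁ U₂ V₂ : Type*} [AddCommGroup U₁] [Module F U₁]
    [AddCommGroup V₁] [Module F V₁] [AddCommGroup U₂] [Module F U₂] [AddCommGroup V₂]
    [Module F V₂] [FiniteDimensional F U₁] [FiniteDimensional F V₁] [FiniteDimensional F U₂]
    [FiniteDimensional F V₂]
    {f : ι → U₁ →ₗ[F] V₁} {g : ι → U₂ →ₗ[F] V₂} (hf : Semistable F f) (hg : Semistable F g)
    (hprop : finrank F U₂ * finrank F V₁ = finrank F U₁ * finrank F V₂) :
    Semistable F (fun l => (f l).prodMap (g l)) := by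
  intro W W' hmap _
  have hm1 : ∀ l, (W.comap (LinearMap.inl F U₁ U₂)).map (f l)
      ≤ W'.comap (LinearMap.inl F V₁ V₂) := by
    rintro l v ⟨u, hu, rfl⟩
    have h2 := hmap l ⟨((u, 0) : U₁ × U₂), hu, rfl⟩
    simpa using h2
  have hm2 : ∀ l, (W.map (LinearMap.snd F U₁ U₂)).map (g l)
      ≤ W'.map (LinearMap.snd F V₁ V₂) := by
    rintro l v ⟨u, ⟨w, hw, rfl⟩, rfl⟩
    exact ⟨(f l).prodMap (g l) w, hmap l ⟨w, hw, rfl⟩, rfl⟩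
  have h1 := le_all' hf _ _ hm1
  have h2 := le_all' hg _ _ hm2
  have d1 := finrank_prod_decomp (F := F) W
  have d2 := finrank_prod_decomp (F := F) W'
  rw [d1, d2, Module.finrank_prod, Module.finrank_prod]
  exact nat_prod_ineq h1 h2 hprop (Submodule.finrank_le _) (Submodule.finrank_le _)

def piSuccEquiv (n : ℕ) (M : Type*) [AddCommGroup M] [Module F M] :
    (Fin (n+1) → M) ≃ₗ[F] M × (Fin n → M) where
  toFun v := (v 0, fun i => v i.succ)
  invFun p := Fin.cons p.1 p.2
  map_add' _ _ := rfl
  map_smul' _ _ := rfl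
  left_inv v := Fin.cons_self_tail v
  right_inv p := by
    refine Prod.ext (by simp) ?_
    funext i
    simp

def piRep {U V : Type*} [AddCommGroup U] [Module F U] [AddCommGroup V] [Module F V]
    (f : U →ₗ[F] V) (n : ℕ) : (Fin n → U) →ₗ[F] (Fin n → V) :=
  LinearMap.pi fun i => f.comp (LinearMap.proj i)

theorem semistable_pi {ι U V : Type*} [AddCommGroup U] [Module F U] [AddCommGroup V]
    [Module F V] [FiniteDimensional F U] [FiniteDimensional F V]
    {f : ι → U →ₗ[F] V} (hf : Semistable F f) (n : ℕ) :
    Semistable F (fun l => piRep (f l) n) := by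
  induction n with
  | zero =>
    intro U' V' _ _
    have : Subsingleton (Fin 0 → V) := by infer_instance
    rw [Module.finrank_zero_of_subsingleton (M := Fin 0 → V)]
    simp
  | succ n ih =>
    have hp := semistable_prod hf ih (by
      rw [finrank_fin_fun', finrank_fin_fun']; ring)
    refine semistable_of_equiv (piSuccEquiv n U).symm (piSuccEquiv n V).symm ?_ hp
    intro l u
    funext i
    induction i using Fin.cases with
    | zero =>
      show f l ((Fin.cons u.1 u.2 : Fin (n+1) → U) 0)
        = (Fin.cons (f l u.1) ((LinearMap.pi fun i => f l ∘ₗ LinearMap.proj i) u.2) : Fin (n+1) → V) 0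
      simp
    | succ j =>
      show f l ((Fin.cons u.1 u.2 : Fin (n+1) → U) j.succ)
        = (Fin.cons (f l u.1) ((LinearMap.pi fun i => f l ∘ₗ LinearMap.proj i) u.2) : Fin (n+1) → V) j.succ
      simp

end AuxGeneral

section CertSection
open Polynomial

section CertA
variable {F : Type*} [Field F]

def Cert {k m p : ℕ} (A : Fin k → Matrix (Fin p) (Fin m) F)
    (K : Type*) [Field K] [Algebra F K] : Prop :=
  ∃ (a b : ℕ) (X : Matrix (Fin m) (Fin a) K) (Y : Matrix (Fin a) (Fin m) K)
    (W : Matrix (Fin p) (Fin b) K) (C : Fin k → Matrix (Fin b) (Fin a) K),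
    m * b < p * a ∧ Y * X = 1 ∧ ∀ l, ((A l).map (algebraMap F K)) * X = W * C l

theorem matrix_map_inj {α β n m : Type*} {ψ : α → β} (hψ : Function.Injective ψ)
    {M N : Matrix n m α} (h : M.map ψ = N.map ψ) : M = N := by
  ext i j
  exact hψ (congrFun (congrFun h i) j)

theorem cert_push {k m p : ℕ} {A : Fin k → Matrix (Fin p) (Fin m) F}
    {K K' : Type*} [Field K] [Algebra F K] [Field K'] [Algebra F K']
    (ψ : K →+* K') (hψ : ∀ c, ψ (algebraMap F K c) = algebraMap F K' c)
    (h : Cert A K) : Cert A K' := by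
  obtain ⟨a, b, X, Y, W, C, hab, hYX, hAX⟩ := h
  refine ⟨a, b, X.map ψ, Y.map ψ, W.map ψ, fun l => (C l).map ψ, hab, ?_, ?_⟩
  · rw [← Matrix.map_mul, hYX, Matrix.map_one ψ (map_zero ψ) (map_one ψ)]
  · intro l
    have hA : (A l).map (algebraMap F K') = ((A l).map (algebraMap F K)).map ψ := by
      rw [Matrix.map_map]
      ext i j
      exact (hψ _).symm
    rw [hA, ← Matrix.map_mul, hAX l, Matrix.map_mul]

theorem cert_tower {k m p : ℕ} {A : Fin k → Matrix (Fin p) (Fin m) F}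
    {E K : Type*} [Field E] [Algebra F E] [Field K] [Algebra F K] [Algebra E K]
    [IsScalarTower F E K] :
    Cert A K ↔ Cert (fun l => (A l).map (algebraMap F E)) K := by
  have hmat : ∀ l, ((A l).map (algebraMap F E)).map (algebraMap E K)
      = (A l).map (algebraMap F K) := by
    intro l
    rw [Matrix.map_map]
    ext i j
    exact (IsScalarTower.algebraMap_apply F E K _).symm
  constructor
  · rintro ⟨a, b, X, Y, W, C, hab, hYX, hAX⟩
    exact ⟨a, b, X, Y, W, C, hab, hYX, fun l => by rw [hmat l]; exact hAX l⟩
  · rintro ⟨a, b, X, Y, W, C, hab, hYX, hAX⟩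
    exact ⟨a, b, X, Y, W, C, hab, hYX, fun l => by rw [← hmat l]; exact hAX l⟩

theorem cert_descend {k m p : ℕ} {A : Fin k → Matrix (Fin p) (Fin m) F}
    {K : Type*} [Field K] [Algebra F K] (h : Cert A K) :
    ∃ s : Finset K, Cert A ↥(IntermediateField.adjoin F (s : Set K)) := by
  classical
  obtain ⟨a, b, X, Y, W, C, hab, hYX, hAX⟩ := h
  set s : Finset K :=
    ((Finset.univ.image fun ij : Fin m × Fin a => X ij.1 ij.2) ∪
     (Finset.univ.image fun ij : Fin a × Fin m => Y ij.1 ij.2) ∪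
     (Finset.univ.image fun ij : Fin p × Fin b => W ij.1 ij.2)) ∪
     (Finset.univ.image fun t : Fin k × Fin b × Fin a => C t.1 t.2.1 t.2.2) with hs
  set L := IntermediateField.adjoin F (s : Set K) with hL
  have hsub : (s : Set K) ⊆ L := IntermediateField.subset_adjoin F _
  have memX : ∀ i j, X i j ∈ L := fun i j => hsub (by
    simp only [hs, Finset.coe_union, Set.mem_union, Finset.coe_image, Set.mem_image]
    exact Or.inl (Or.inl (Or.inl ⟨(i, j), by simp⟩)))
  have memY : ∀ i j, Y i j ∈ L := fun i j => hsub (by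
    simp only [hs, Finset.coe_union, Set.mem_union, Finset.coe_image, Set.mem_image]
    exact Or.inl (Or.inl (Or.inr ⟨(i, j), by simp⟩)))
  have memW : ∀ i j, W i j ∈ L := fun i j => hsub (by
    simp only [hs, Finset.coe_union, Set.mem_union, Finset.coe_image, Set.mem_image]
    exact Or.inl (Or.inr ⟨(i, j), by simp⟩))
  have memC : ∀ l i j, C l i j ∈ L := fun l i j => hsub (by
    simp only [hs, Finset.coe_union, Set.mem_union, Finset.coe_image, Set.mem_image]
    exact Or.inr ⟨(l, i, j), by simp⟩)
  refine ⟨s, a, b, Matrix.of fun i j => (⟨X i j, memX i j⟩ : L),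
    Matrix.of fun i j => (⟨Y i j, memY i j⟩ : L),
    Matrix.of fun i j => (⟨W i j, memW i j⟩ : L),
    fun l => Matrix.of fun i j => (⟨C l i j, memC l i j⟩ : L), hab, ?_, ?_⟩
  · have hinj : Function.Injective (algebraMap ↥L K) := (algebraMap ↥L K).injective
    apply matrix_map_inj hinj
    rw [Matrix.map_mul, Matrix.map_one _ (map_zero _) (map_one _)]
    have e1 : (Matrix.of fun i j => (⟨Y i j, memY i j⟩ : L)).map (algebraMap ↥L K) = Y := by
      ext i j; rfl
    have e2 : (Matrix.of fun i j => (⟨X i j, memX i j⟩ : L)).map (algebraMap ↥L K) = X := by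
      ext i j; rfl
    rw [e1, e2, hYX]
  · intro l
    have hinj : Function.Injective (algebraMap ↥L K) := (algebraMap ↥L K).injective
    apply matrix_map_inj hinj
    rw [Matrix.map_mul, Matrix.map_mul]
    have e2 : (Matrix.of fun i j => (⟨X i j, memX i j⟩ : L)).map (algebraMap ↥L K) = X := by
      ext i j; rfl
    have e3 : (Matrix.of fun i j => (⟨W i j, memW i j⟩ : L)).map (algebraMap ↥L K) = W := by
      ext i j; rfl
    have e4 : (Matrix.of fun i j => (⟨C l i j, memC l i j⟩ : L)).map (algebraMap ↥L K)
        = C l := by ext i j; rfl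
    have e5 : ((A l).map (algebraMap F ↥L)).map (algebraMap ↥L K)
        = (A l).map (algebraMap F K) := by
      rw [Matrix.map_map]
      ext i j
      exact (IsScalarTower.algebraMap_apply F ↥L K _).symm
    rw [e2, e3, e4, e5, hAX l]
end CertA

section CertB
variable {K : Type*} [Field K] {k m p : ℕ}

/-- From a destabilizing subrepresentation, get matrix certificate data. -/
theorem violation_to_cert (B : Fin k → Matrix (Fin p) (Fin m) K)
    (U' : Submodule K (Fin m → K)) (V' : Submodule K (Fin p → K))
    (hmap : ∀ l, U'.map (Matrix.mulVecLin (B l)) ≤ V') :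
    ∃ (X : Matrix (Fin m) (Fin (finrank K U')) K) (Y : Matrix (Fin (finrank K U')) (Fin m) K)
      (W : Matrix (Fin p) (Fin (finrank K V')) K)
      (C : Fin k → Matrix (Fin (finrank K V')) (Fin (finrank K U')) K),
      Y * X = 1 ∧ ∀ l, B l * X = W * C l := by
  classical
  set a := finrank K U'
  set b := finrank K V'
  let bU : Basis (Fin a) K U' := Module.finBasis K U'
  let bV : Basis (Fin b) K V' := Module.finBasis K V'
  let h : (Fin a → K) →ₗ[K] (Fin m → K) := U'.subtype ∘ₗ (bU.equivFun.symm : _ ≃ₗ[K] _)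
  have hinj : Function.Injective h :=
    (Submodule.injective_subtype U').comp bU.equivFun.symm.injective
  obtain ⟨g, hg⟩ := h.exists_leftInverse_of_injective (LinearMap.ker_eq_bot.mpr hinj)
  let hW : (Fin b → K) →ₗ[K] (Fin p → K) := V'.subtype ∘ₗ (bV.equivFun.symm : _ ≃ₗ[K] _)
  have hmem : ∀ l v, Matrix.mulVecLin (B l) (h v) ∈ V' := by
    intro l v
    exact hmap l ⟨h v, (bU.equivFun.symm v).2, rfl⟩
  let c : Fin k → ((Fin a → K) →ₗ[K] (Fin b → K)) := fun l =>
    (bV.equivFun : _ ≃ₗ[K] _) ∘ₗ LinearMap.codRestrict V'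
      ((Matrix.mulVecLin (B l)) ∘ₗ h) (hmem l)
  refine ⟨LinearMap.toMatrix' h, LinearMap.toMatrix' g, LinearMap.toMatrix' hW,
    fun l => LinearMap.toMatrix' (c l), ?_, ?_⟩
  · rw [← LinearMap.toMatrix'_comp, hg, LinearMap.toMatrix'_id]
  · intro l
    have hBl : B l = LinearMap.toMatrix' (Matrix.mulVecLin (B l)) := by
      rw [← Matrix.toLin'_apply', LinearMap.toMatrix'_toLin']
    rw [hBl, ← LinearMap.toMatrix'_comp, ← LinearMap.toMatrix'_comp]
    congr 1
    apply LinearMap.ext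
    intro v
    show Matrix.mulVecLin (B l) (h v) = V'.subtype (bV.equivFun.symm (bV.equivFun _))
    rw [LinearEquiv.symm_apply_apply]
    rfl

/-- From matrix certificate data, get a destabilizing subrepresentation. -/
theorem cert_to_violation {a b : ℕ} (B : Fin k → Matrix (Fin p) (Fin m) K)
    (X : Matrix (Fin m) (Fin a) K) (Y : Matrix (Fin a) (Fin m) K)
    (W : Matrix (Fin p) (Fin b) K) (C : Fin k → Matrix (Fin b) (Fin a) K)
    (hYX : Y * X = 1) (hAX : ∀ l, B l * X = W * C l) :
    ∃ (U' : Submodule K (Fin m → K)) (V' : Submodule K (Fin p → K)),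
      (∀ l, U'.map (Matrix.mulVecLin (B l)) ≤ V') ∧ finrank K U' = a ∧ finrank K V' ≤ b := by
  have hlv : ∀ w, Matrix.mulVecLin Y (Matrix.mulVecLin X w) = w := by
    intro w
    have : (Matrix.mulVecLin (Y * X)) w = w := by rw [hYX, Matrix.mulVecLin_one]; rfl
    rwa [Matrix.mulVecLin_mul] at this
  have hXinj : Function.Injective (Matrix.mulVecLin X) := by
    intro u v huv
    have := congrArg (Matrix.mulVecLin Y) huv
    rwa [hlv, hlv] at this
  refine ⟨LinearMap.range (Matrix.mulVecLin X), LinearMap.range (Matrix.mulVecLin W), ?_, ?_, ?_⟩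
  · rintro l v ⟨u, ⟨w, rfl⟩, rfl⟩
    refine ⟨Matrix.mulVecLin (C l) w, ?_⟩
    have h1 : Matrix.mulVecLin (B l * X) w = Matrix.mulVecLin (W * C l) w := by rw [hAX l]
    rw [Matrix.mulVecLin_mul, Matrix.mulVecLin_mul] at h1
    exact h1.symm
  · rw [LinearMap.finrank_range_of_inj hXinj, Module.finrank_fin_fun]
  · calc finrank K (LinearMap.range (Matrix.mulVecLin W)) ≤ finrank K (Fin b → K) :=
        LinearMap.finrank_range_le _
      _ = b := Module.finrank_fin_fun K

end CertB

section CertC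
variable {F : Type*} [Field F] {k m p : ℕ} {A : Fin k → Matrix (Fin p) (Fin m) F}

theorem map_id_algebra (M : Matrix (Fin p) (Fin m) F) : M.map (algebraMap F F) = M := by
  ext i j
  simp [Algebra.algebraMap_self]

/-- flip equiv -/
def flipLEquiv (α β : Type*) [Fintype α] [Fintype β] (M : Type*) [AddCommGroup M]
    [Module F M] : (α → β → M) ≃ₗ[F] (β → α → M) where
  toFun v := Function.swap v
  invFun v := Function.swap v
  map_add' _ _ := rfl
  map_smul' _ _ := rfl
  left_inv _ := rfl
  right_inv _ := rfl

theorem not_semistable_imp_cert {K : Type*} [Field K] [Algebra F K]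
    (h : ¬ Semistable K (fun l => Matrix.mulVecLin ((A l).map (algebraMap F K)))) :
    Cert A K := by
  rw [Semistable] at h
  push_neg at h
  obtain ⟨U', V', hmap, hne, hlt⟩ := h
  rw [Module.finrank_fin_fun, Module.finrank_fin_fun] at hlt
  obtain ⟨X, Y, W, C, hYX, hAX⟩ := violation_to_cert _ U' V' hmap
  exact ⟨_, _, X, Y, W, C, hlt.trans_eq (mul_comm _ _), hYX, hAX⟩

theorem cert_finite {K : Type*} [Field K] [Algebra F K] [FiniteDimensional F K]
    (h : Cert A K) : Cert A F := by
  classical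
  by_contra hnF
  -- semistability over F of the matrix representation
  have hmatF : Semistable F (fun l => Matrix.mulVecLin (A l)) := by
    intro U' V' hmap hne
    by_contra hlt
    push_neg at hlt
    rw [Module.finrank_fin_fun, Module.finrank_fin_fun] at hlt
    have hmap' : ∀ l, U'.map (Matrix.mulVecLin ((A l).map (algebraMap F F))) ≤ V' := by
      intro l
      rw [map_id_algebra]
      exact hmap l
    obtain ⟨X, Y, W, C, hYX, hAX⟩ := violation_to_cert _ U' V' hmap'
    exact hnF ⟨_, _, X, Y, W, C, hlt.trans_eq (mul_comm _ _), hYX, hAX⟩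
  obtain ⟨a, b, X, Y, W, C, hab, hYX, hAX⟩ := h
  obtain ⟨U', V', hmap, hrU, hrV⟩ := cert_to_violation _ X Y W C hYX hAX
  set N := finrank F K with hN
  have hNpos : 0 < N := finrank_pos
  let κ : Basis (Fin N) F K := Module.finBasis F K
  -- the equivalences
  let eU : (Fin m → K) ≃ₗ[F] (Fin N → Fin m → F) :=
    (LinearEquiv.piCongrRight fun _ : Fin m => κ.equivFun) ≪≫ₗ flipLEquiv (Fin m) (Fin N) F
  let eV : (Fin p → K) ≃ₗ[F] (Fin N → Fin p → F) :=
    (LinearEquiv.piCongrRight fun _ : Fin p => κ.equivFun) ≪≫ₗ flipLEquiv (Fin p) (Fin N) F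
  have hsq : ∀ (l : Fin k) (v : Fin m → K),
      piRep (Matrix.mulVecLin (A l)) N (eU v)
        = eV ((Matrix.mulVecLin ((A l).map (algebraMap F K))).restrictScalars F v) := by
    intro l v
    funext n i
    show Matrix.mulVecLin (A l) (fun j => κ.equivFun (v j) n) i
      = κ.equivFun (Matrix.mulVecLin ((A l).map (algebraMap F K)) v i) n
    rw [Matrix.mulVecLin_apply, Matrix.mulVecLin_apply, Matrix.mulVec, Matrix.mulVec]
    show ∑ j, A l i j * κ.equivFun (v j) n = κ.equivFun (∑ j, (A l).map (algebraMap F K) i j * v j) n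
    have : (κ.equivFun : K →ₗ[F] (Fin N → F)) (∑ j, (A l).map (algebraMap F K) i j * v j)
        = ∑ j, (A l i j) • (κ.equivFun : K →ₗ[F] (Fin N → F)) (v j) := by
      rw [map_sum]
      congr 1
      funext j
      rw [Matrix.map_apply, ← Algebra.smul_def, map_smul]
    rw [show κ.equivFun (∑ j, (A l).map (algebraMap F K) i j * v j)
        = (κ.equivFun : K →ₗ[F] (Fin N → F)) (∑ j, (A l).map (algebraMap F K) i j * v j) from rfl,
      this]
    simp [Finset.sum_apply]
  have hSSKF : Semistable F
      (fun l => (Matrix.mulVecLin ((A l).map (algebraMap F K))).restrictScalars F) := by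
    refine semistable_of_equiv eU.symm eV.symm ?_ (semistable_pi hmatF N)
    intro l u
    have := hsq l (eU.symm u)
    rw [LinearEquiv.apply_symm_apply] at this
    rw [this, LinearEquiv.symm_apply_apply]
  have hm'' : ∀ l, (U'.restrictScalars F).map
      ((Matrix.mulVecLin ((A l).map (algebraMap F K))).restrictScalars F)
      ≤ V'.restrictScalars F := by
    rintro l v ⟨u, hu, rfl⟩
    exact hmap l ⟨u, hu, rfl⟩
  have key := le_all' hSSKF _ _ hm''
  have e1 : finrank F (U'.restrictScalars F) = N * finrank K U' := by
    rw [LinearEquiv.finrank_eq ((Submodule.restrictScalarsEquiv F K (Fin m → K) U').restrictScalars F),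
      ← Module.finrank_mul_finrank F K U']
  have e2 : finrank F (V'.restrictScalars F) = N * finrank K V' := by
    rw [LinearEquiv.finrank_eq ((Submodule.restrictScalarsEquiv F K (Fin p → K) V').restrictScalars F),
      ← Module.finrank_mul_finrank F K V']
  rw [e1, e2, finrank_fin_fun', finrank_fin_fun', hrU, ← hN] at key
  -- key : N * a * (p * N) ≤ m * N * (N * finrank K V')
  have hfv : finrank K V' ≤ b := hrV
  have k2 : a * p * (N * N) ≤ m * finrank K V' * (N * N) := by nlinarith [key]
  have k3 : a * p ≤ m * finrank K V' :=
    Nat.le_of_mul_le_mul_right k2 (Nat.mul_pos hNpos hNpos)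
  have k4 : p * a ≤ m * b := by
    calc p * a = a * p := mul_comm _ _
      _ ≤ m * finrank K V' := k3
      _ ≤ m * b := Nat.mul_le_mul_left _ hfv
  omega
end CertC

section CertD
variable {F : Type*} [Field F]

theorem matrix_map_smul {R S n m' : Type*} [CommSemiring R] [CommSemiring S] (ψ : R →+* S)
    (c : R) (M : Matrix n m' R) : (c • M).map ⇑ψ = ψ c • M.map ⇑ψ := by
  ext i j
  simp [smul_eq_mul]

theorem clear_denoms {K : Type*} [Field K] [Algebra F K] (θ : F[X] →+* K)
    {α β : Type*} [Fintype α] [Fintype β] [DecidableEq α] [DecidableEq β]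
    (M : Matrix α β K) (P Q : α → β → F[X]) (hQ : ∀ i j, θ (Q i j) ≠ 0)
    (hPQ : ∀ i j, M i j * θ (Q i j) = θ (P i j)) :
    ∃ (Mh : Matrix α β F[X]) (δ : F[X]), δ ≠ 0 ∧ Mh.map ⇑θ = θ δ • M := by
  classical
  refine ⟨Matrix.of fun i j => P i j * ∏ e ∈ Finset.univ.erase (i, j), Q e.1 e.2,
    ∏ e : α × β, Q e.1 e.2, ?_, ?_⟩
  · refine Finset.prod_ne_zero_iff.mpr fun e _ h0 => hQ e.1 e.2 ?_
    rw [h0, map_zero]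
  · ext i j
    show θ (P i j * ∏ e ∈ Finset.univ.erase (i, j), Q e.1 e.2)
      = θ (∏ e : α × β, Q e.1 e.2) • M i j
    rw [map_mul, ← hPQ i j, smul_eq_mul, map_prod, map_prod,
      ← Finset.mul_prod_erase Finset.univ (fun e => θ (Q e.1 e.2)) (Finset.mem_univ (i, j))]
    ring

theorem cert_trans {k m p : ℕ} {A : Fin k → Matrix (Fin p) (Fin m) F}
    {K : Type*} [Field K] [Algebra F K] (x : K) (hx : Transcendental F x)
    (h : Cert A ↥(IntermediateField.adjoin F {x})) : Cert A F := by
  classical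
  set E := IntermediateField.adjoin F {x} with hE
  obtain ⟨a, b, X0, Y0, W0, C0, hab, hYX0, hAX0⟩ := h
  -- map everything into K
  set X : Matrix (Fin m) (Fin a) K := X0.map (algebraMap ↥E K) with hX
  set Y : Matrix (Fin a) (Fin m) K := Y0.map (algebraMap ↥E K) with hY
  set W : Matrix (Fin p) (Fin b) K := W0.map (algebraMap ↥E K) with hW
  set C : Fin k → Matrix (Fin b) (Fin a) K := fun l => (C0 l).map (algebraMap ↥E K) with hC
  have hYX : Y * X = 1 := by
    rw [hY, hX, ← Matrix.map_mul, hYX0, Matrix.map_one _ (map_zero _) (map_one _)]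
  have hAX : ∀ l, ((A l).map (algebraMap F K)) * X = W * C l := by
    intro l
    have e5 : ((A l).map (algebraMap F ↥E)).map (algebraMap ↥E K)
        = (A l).map (algebraMap F K) := by
      rw [Matrix.map_map]
      ext i j
      exact (IsScalarTower.algebraMap_apply F ↥E K _).symm
    rw [hX, hW, hC, ← e5, ← Matrix.map_mul, hAX0 l, Matrix.map_mul]
  have memE : ∀ (y : ↥E), algebraMap ↥E K y ∈ E := fun y => y.2
  -- representation of entries as quotients of polynomials in x
  have hrep : ∀ z : K, z ∈ E → ∃ r s : F[X],
      aeval x s ≠ 0 ∧ z * aeval x s = aeval x r := by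
    intro z hz
    rw [hE, IntermediateField.mem_adjoin_simple_iff] at hz
    obtain ⟨r, s, hzrs⟩ := hz
    by_cases hs : aeval x s = 0
    · refine ⟨0, 1, by simp, ?_⟩
      rw [hzrs, hs, div_zero]
      simp
    · exact ⟨r, s, hs, by rw [hzrs, div_mul_cancel₀ _ hs]⟩
  set θ : F[X] →+* K := (Polynomial.aeval x : F[X] →ₐ[F] K).toRingHom with hθ
  have hθapp : ∀ q, θ q = aeval x q := fun q => rfl
  have hθinj : Function.Injective θ := by
    rw [hθ]
    exact transcendental_iff_injective.mp hx
  choose PX QX hQX hPQX using fun i j => hrep (X i j) (memE _)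
  choose PY QY hQY hPQY using fun i j => hrep (Y i j) (memE _)
  choose PW QW hQW hPQW using fun i j => hrep (W i j) (memE _)
  choose PC QC hQC hPQC using fun l i j => hrep (C l i j) (memE _)
  obtain ⟨Xh, δX, hδX, hXh⟩ := clear_denoms θ X PX QX hQX hPQX
  obtain ⟨Yh, δY, hδY, hYh⟩ := clear_denoms θ Y PY QY hQY hPQY
  obtain ⟨Wh, δW, hδW, hWh⟩ := clear_denoms θ W PW QW hQW hPQW
  have hCd := fun l => clear_denoms θ (C l) (PC l) (QC l) (hQC l) (hPQC l)
  choose Ch δC hδC hCh using hCd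
  -- polynomial identities
  have hYXpoly : Yh * Xh = (δY * δX) • (1 : Matrix (Fin a) (Fin a) F[X]) := by
    apply matrix_map_inj hθinj
    rw [Matrix.map_mul, hYh, hXh, Matrix.smul_mul, Matrix.mul_smul, smul_smul, hYX,
      matrix_map_smul, Matrix.map_one _ (map_zero _) (map_one _), map_mul]
  have hAhat : ∀ l, ((A l).map (algebraMap F F[X])).map ⇑θ = (A l).map (algebraMap F K) := by
    intro l
    rw [Matrix.map_map]
    ext i j
    show θ (algebraMap F F[X] (A l i j)) = algebraMap F K (A l i j)
    rw [hθapp, Polynomial.algebraMap_eq, Polynomial.aeval_C]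
  have hAXpoly : ∀ l, (δW * δC l) • (((A l).map (algebraMap F F[X])) * Xh)
      = δX • (Wh * Ch l) := by
    intro l
    apply matrix_map_inj hθinj
    rw [matrix_map_smul, matrix_map_smul, Matrix.map_mul, Matrix.map_mul, hAhat, hXh, hWh, hCh,
      Matrix.mul_smul, Matrix.smul_mul, Matrix.mul_smul, hAX l, smul_smul, smul_smul, smul_smul]
    congr 1
    rw [map_mul]
    ring
  -- specialize at a point of the algebraic closure
  set Fb := AlgebraicClosure F
  set Δ : F[X] := δX * δY * δW * ∏ l, δC l with hΔdef
  have hΔ : Δ ≠ 0 := by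
    refine mul_ne_zero (mul_ne_zero (mul_ne_zero hδX hδY) hδW) ?_
    exact Finset.prod_ne_zero_iff.mpr fun l _ => hδC l
  have hΔK : Δ.map (algebraMap F Fb) ≠ 0 := Polynomial.map_ne_zero hΔ
  obtain ⟨c, hc⟩ := Infinite.exists_notMem_finset (Δ.map (algebraMap F Fb)).roots.toFinset
  have hcΔ : aeval c Δ ≠ 0 := by
    intro h0
    apply hc
    rw [Multiset.mem_toFinset, Polynomial.mem_roots hΔK]
    rwa [Polynomial.IsRoot.def, Polynomial.eval_map, ← Polynomial.aeval_def]
  set ev : F[X] →+* Fb := (Polynomial.aeval c : F[X] →ₐ[F] Fb).toRingHom with hev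
  have hevΔ : ev Δ ≠ 0 := hcΔ
  have hevX : ev δX ≠ 0 := fun h0 => hevΔ (by rw [hΔdef, map_mul, map_mul, map_mul, h0]; ring)
  have hevY : ev δY ≠ 0 := fun h0 => hevΔ (by rw [hΔdef, map_mul, map_mul, map_mul, h0]; ring)
  have hevW : ev δW ≠ 0 := fun h0 => hevΔ (by rw [hΔdef, map_mul, map_mul, h0]; ring)
  have hevC : ∀ l, ev (δC l) ≠ 0 := by
    intro l h0
    apply hevΔ
    rw [hΔdef, map_mul, map_prod]
    rw [show (∏ l', ev (δC l')) = 0 from Finset.prod_eq_zero (Finset.mem_univ l) h0]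
    ring
  -- build the certificate over the algebraic closure
  have hcert : Cert A Fb := by
    refine ⟨a, b, Xh.map ⇑ev, (ev δY * ev δX)⁻¹ • (Yh.map ⇑ev), Wh.map ⇑ev,
      fun l => ((ev δW * ev (δC l))⁻¹ * ev δX) • ((Ch l).map ⇑ev), hab, ?_, ?_⟩
    · rw [Matrix.smul_mul, ← Matrix.map_mul, hYXpoly, matrix_map_smul,
        Matrix.map_one _ (map_zero _) (map_one _), smul_smul, map_mul,
        inv_mul_cancel₀ (mul_ne_zero hevY hevX), one_smul]
    · intro l
      have hmain := congrArg (fun M => M.map ⇑ev) (hAXpoly l)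
      simp only [matrix_map_smul, Matrix.map_mul] at hmain
      have hAev : ((A l).map (algebraMap F F[X])).map ⇑ev = (A l).map (algebraMap F Fb) := by
        rw [Matrix.map_map]
        ext i j
        show ev (algebraMap F F[X] (A l i j)) = algebraMap F Fb (A l i j)
        rw [hev]
        show (Polynomial.aeval c) (algebraMap F F[X] (A l i j)) = algebraMap F Fb (A l i j)
        rw [Polynomial.algebraMap_eq, Polynomial.aeval_C]
      rw [hAev, map_mul] at hmain
      -- hmain : (ev δW * ev (δC l)) • ((A l).map (algebraMap F Fb) * Xh.map ev)
      --   = ev δX • (Wh.map ev * (Ch l).map ev)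
      rw [Matrix.mul_smul, mul_smul, ← hmain, smul_smul,
        inv_mul_cancel₀ (mul_ne_zero hevW (hevC l)), one_smul]
  -- descend from the algebraic closure to F
  obtain ⟨s, hs⟩ := cert_descend hcert
  haveI : FiniteDimensional F ↥(IntermediateField.adjoin F (s : Set Fb)) := by
    refine IntermediateField.finiteDimensional_adjoin fun y _ => ?_
    exact (Algebra.IsAlgebraic.isAlgebraic (R := F) y).isIntegral
  exact cert_finite hs
theorem cert_congr {F : Type*} [Field F] {k m p : ℕ} {A : Fin k → Matrix (Fin p) (Fin m) F}
    {K : Type*} [Field K] [Algebra F K] {E₁ E₂ : IntermediateField F K} (h : E₁ = E₂)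
    (hc : Cert A ↥E₁) : Cert A ↥E₂ := by
  subst h
  exact hc

theorem cert_bot {F : Type*} [Field F] {k m p : ℕ} {A : Fin k → Matrix (Fin p) (Fin m) F}
    {K : Type*} [Field K] [Algebra F K]
    (hc : Cert A ↥(⊥ : IntermediateField F K)) : Cert A F := by
  refine cert_push ((IntermediateField.botEquiv F K : _ ≃ₐ[F] F) : _ →+* F) ?_ hc
  intro c
  show (IntermediateField.botEquiv F K) (algebraMap F _ c) = algebraMap F F c
  rw [IntermediateField.botEquiv_def]
  simp

theorem cert_adjoin (n : ℕ) : ∀ (F K : Type u) [Field F] [Field K] [Algebra F K]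
    (k m p : ℕ) (A : Fin k → Matrix (Fin p) (Fin m) F) (s : Finset K), s.card ≤ n →
    Cert A ↥(IntermediateField.adjoin F (s : Set K)) → Cert A F := by
  induction n with
  | zero =>
    intro F K _ _ _ k m p A s hcard hc
    have hs : s = ∅ := Finset.card_eq_zero.mp (Nat.le_zero.mp hcard)
    subst hs
    refine cert_bot (cert_congr ?_ hc)
    rw [Finset.coe_empty, IntermediateField.adjoin_empty]
  | succ n ih =>
    intro F K _ _ _ k m p A s hcard hc
    classical
    by_cases hs : s = ∅
    · subst hs
      refine cert_bot (cert_congr ?_ hc)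
      rw [Finset.coe_empty, IntermediateField.adjoin_empty]
    · obtain ⟨x, hxs⟩ := Finset.nonempty_of_ne_empty hs
      set E := IntermediateField.adjoin F ({x} : Set K) with hEdef
      set T := s.erase x with hT
      -- identify adjoin F s with adjoin E T
      have hres : IntermediateField.restrictScalars F
          (IntermediateField.adjoin ↥E ((T : Finset K) : Set K))
          = IntermediateField.adjoin F (s : Set K) := by
        rw [IntermediateField.adjoin_adjoin_left]
        congr 1
        rw [hT, Finset.coe_erase, Set.singleton_union, Set.insert_diff_singleton,
          Set.insert_eq_self]
        exact hxs
      have hmem : ∀ z : K, (z ∈ IntermediateField.adjoin F (s : Set K)) ↔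
          z ∈ IntermediateField.adjoin ↥E ((T : Finset K) : Set K) := by
        intro z
        rw [← hres]
        rfl
      set E' := IntermediateField.adjoin ↥E ((T : Finset K) : Set K) with hE'
      let ψ : ↥(IntermediateField.adjoin F (s : Set K)) →+* ↥E' :=
        { toFun := fun y => ⟨y.1, (hmem y.1).mp y.2⟩
          map_one' := rfl
          map_mul' := fun _ _ => rfl
          map_zero' := rfl
          map_add' := fun _ _ => rfl }
      have hψ : ∀ c, ψ (algebraMap F _ c) = algebraMap F ↥E' c := fun c => rfl
      have hcert2 : Cert A ↥E' := cert_push ψ hψ hc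
      haveI hst : IsScalarTower F ↥E ↥E' := IsScalarTower.of_algebraMap_eq (fun c => rfl)
      have hcert3 : Cert (fun l => (A l).map (algebraMap F ↥E)) ↥E' := cert_tower.mp hcert2
      have hcardT : T.card ≤ n := by
        rw [hT, Finset.card_erase_of_mem hxs]
        omega
      have hcert4 : Cert (fun l => (A l).map (algebraMap F ↥E)) ↥E :=
        ih ↥E K k m p (fun l => (A l).map (algebraMap F ↥E)) T hcardT hcert3
      have hcert5 : Cert A ↥E := cert_tower.mpr hcert4
      by_cases halg : IsAlgebraic F x
      · haveI : FiniteDimensional F ↥E :=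
          IntermediateField.adjoin.finiteDimensional halg.isIntegral
        exact cert_finite hcert5
      · exact cert_trans x halg hcert5

theorem cert_down (F K : Type u) [Field F] [Field K] [Algebra F K] {k m p : ℕ}
    (A : Fin k → Matrix (Fin p) (Fin m) F) (h : Cert A K) : Cert A F := by
  obtain ⟨s, hs⟩ := cert_descend h
  exact cert_adjoin s.card F K k m p A s le_rfl hs

end CertD
end CertSection

/-- base change along a field extension `K/F` preserves semistability of
Kronecker-quiver representations. -/
theorem statement13 (F K : Type) [Field F] [Field K] [Algebra F K] (k : ℕ) (U V : Type)
    [AddCommGroup U] [Module F U] [AddCommGroup V] [Module F V]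
    [FiniteDimensional F U] [FiniteDimensional F V]
    (f : Fin k → U →ₗ[F] V) (hf : Semistable F f) :
    Semistable K (fun l => LinearMap.baseChange K (f l)) := by
  classical
  set m := finrank F U with hm
  set p := finrank F V with hp
  set bU : Basis (Fin m) F U := Module.finBasis F U with hbU
  set bV : Basis (Fin p) F V := Module.finBasis F V with hbV
  set A : Fin k → Matrix (Fin p) (Fin m) F := fun l => LinearMap.toMatrix bU bV (f l) with hA
  -- Step 1: matrix semistability over F
  have hFmat : Semistable F (fun l => Matrix.mulVecLin (A l)) := by
    refine semistable_of_equiv (bU.equivFun) (bV.equivFun) ?_ hf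
    intro l u
    rw [Matrix.mulVecLin_apply, Basis.equivFun_apply, Basis.equivFun_apply, hA,
      LinearMap.toMatrix_mulVec_repr]
  -- Step 2: matrix semistability over K
  have hKmat : Semistable K (fun l => Matrix.mulVecLin ((A l).map (algebraMap F K))) := by
    by_contra hcon
    obtain ⟨a, b, X, Y, W, C, hab, hYX, hAX⟩ := cert_down F K A (not_semistable_imp_cert hcon)
    have hAX' : ∀ l, A l * X = W * C l := by
      intro l
      have := hAX l
      rwa [map_id_algebra] at this
    obtain ⟨U', V', hmap, hrU, hrV⟩ := cert_to_violation A X Y W C hYX hAX'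
    have key := le_all' hFmat U' V' hmap
    rw [Module.finrank_fin_fun, Module.finrank_fin_fun, hrU] at key
    have : p * a ≤ m * b := by
      calc p * a = a * p := mul_comm _ _
        _ ≤ m * finrank F V' := key
        _ ≤ m * b := Nat.mul_le_mul_left _ hrV
    omega
  -- Step 3: transfer to the base-changed representation
  set BU : Basis (Fin m) K (TensorProduct F K U) := bU.baseChange K with hBU
  set BV : Basis (Fin p) K (TensorProduct F K V) := bV.baseChange K with hBV
  refine semistable_of_equiv (BU.equivFun.symm) (BV.equivFun.symm) ?_ hKmat
  intro l u
  have hl : (BV.equivFun.toLinearMap).comp ((f l).baseChange K)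
      = (Matrix.mulVecLin ((A l).map (algebraMap F K))).comp (BU.equivFun.toLinearMap) := by
    apply BU.ext
    intro j
    simp only [LinearMap.coe_comp, Function.comp_apply, LinearEquiv.coe_coe,
      LinearEquiv.coe_toLinearMap]
    rw [hBU, Basis.baseChange_apply, LinearMap.baseChange_tmul]
    funext i
    rw [Basis.equivFun_apply, hBV, Basis.baseChange_repr_tmul]
    rw [Basis.equivFun_apply]
    have hrepr : ((bU.baseChange K).repr ((1:K) ⊗ₜ[F] bU j)) = Finsupp.single j 1 := by
      rw [← Basis.baseChange_apply]
      exact Basis.repr_self _ j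
    rw [hrepr]
    rw [show (⇑(Finsupp.single j (1:K) : Fin m →₀ K)) = Pi.single j (1:K) from
      Finsupp.single_eq_pi_single j 1]
    rw [Matrix.mulVecLin_apply, Matrix.mulVec_single_one]
    simp [Matrix.transpose_apply, Matrix.map_apply, hA, LinearMap.toMatrix_apply, Algebra.smul_def]
  have := congrArg (fun (g : TensorProduct F K U →ₗ[K] (Fin p → K)) => g (BU.equivFun.symm u)) hl
  simp only [LinearMap.coe_comp, Function.comp_apply, LinearEquiv.coe_toLinearMap,
    LinearEquiv.apply_symm_apply] at this
  rw [show (f l).baseChange K (BU.equivFun.symm u)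
      = BV.equivFun.symm (BV.equivFun ((f l).baseChange K (BU.equivFun.symm u))) from
    (BV.equivFun.symm_apply_apply _).symm, this]

end Paper
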